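/- Let X be a nonempty Hausdorff real topological vector space, Ψ nonempty, f : X → P(Z,Ψ), and ε₀ > 0 such that Min(f,ε+,Ψ) is compact for all real ε with 0 < ε ≤ ε₀. Then Min(f,0+,Ψ) is nonempty and compact, and Min(f,ε+,Ψ) Hausdorff converges to Min(f,0+,Ψ) as ε → 0: for every neighborhood U of 0 in X there is ε₁ ∈ (0,ε₀] such that for all ε ∈ (0,ε₁], Min(f,ε+,Ψ) ⊆ Min(f,0+,Ψ) + U and Min(f,0+,Ψ) ⊆ Min(f,ε+,Ψ) + U. -/

import Mathlib

open Set Classical Pointwise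

/-- Inf-extension of `ψ` to sets: `ψ^△(D) = ⨅_{z ∈ D} ψ(z)` in `EReal`. -/
noncomputable def infExt {Z : Type*} (ψ : Z → EReal) (D : Set Z) : EReal :=
  ⨅ z ∈ D, ψ z

/-- The Ψ-closure `cl_Ψ D = ⋂_{ψ ∈ Ψ} {z | ψ^△(D) ≤ ψ(z)}`. -/
noncomputable def clPsi {Z : Type*} (Ψ : Set (Z → EReal)) (D : Set Z) : Set Z :=
  ⋂ ψ ∈ Ψ, {z : Z | infExt ψ D ≤ ψ z}

/-- `I_ψ = ⨅_{x ∈ X} ψ^△(f(x))`. -/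
noncomputable def infVal {X Z : Type*} (f : X → Set Z) (ψ : Z → EReal) : EReal :=
  ⨅ x : X, infExt ψ (f x)

/-- The bound `−1/ε`, with the convention `−1/0 := −∞`, as an `EReal`. -/
noncomputable def negInvBound (ε : ℝ) : EReal :=
  if ε = 0 then ⊥ else (((-(1 / ε)) : ℝ) : EReal)

/-- `x` is an `(ε,Ψ)`-minimizer of `f`: there is `ψ ∈ Ψ` with
`ψ^△(f(x)) ≤ I_ψ + ε` if `I_ψ ≠ −∞`, and `ψ^△(f(x)) ≤ −1/ε` if `I_ψ = −∞`. -/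
noncomputable def IsEpsMin {X Z : Type*} (Ψ : Set (Z → EReal)) (f : X → Set Z)
    (ε : ℝ) (x : X) : Prop :=
  ∃ ψ ∈ Ψ, if infVal f ψ = ⊥ then infExt ψ (f x) ≤ negInvBound ε
    else infExt ψ (f x) ≤ infVal f ψ + (ε : EReal)

/-- `x` is an `(ε+,Ψ)`-minimizer of `f`. -/
noncomputable def IsEpsPlusMin {X Z : Type*} (Ψ : Set (Z → EReal)) (f : X → Set Z)
    (ε : ℝ) (x : X) : Prop :=
  ∀ δ : ℝ, 0 < δ → IsEpsMin Ψ f (ε + δ) x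

/-- `Min(f,ε,Ψ)`: the set of `(ε,Ψ)`-minimizers of `f`. -/
noncomputable def MinSet {X Z : Type*} (Ψ : Set (Z → EReal)) (f : X → Set Z)
    (ε : ℝ) : Set X :=
  {x : X | IsEpsMin Ψ f ε x}

/-- `Min(f,ε+,Ψ)`: the set of `(ε+,Ψ)`-minimizers of `f`. -/
noncomputable def MinPlusSet {X Z : Type*} (Ψ : Set (Z → EReal)) (f : X → Set Z)
    (ε : ℝ) : Set X :=
  {x : X | IsEpsPlusMin Ψ f ε x}

lemma negInvBound_le {a b : ℝ} (ha : 0 ≤ a) (hab : a ≤ b) :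
    negInvBound a ≤ negInvBound b := by
  unfold negInvBound
  by_cases h : a = 0
  · simp [h]
  · have ha' : 0 < a := lt_of_le_of_ne ha (Ne.symm h)
    have hb' : 0 < b := ha'.trans_le hab
    rw [if_neg h, if_neg hb'.ne']
    exact EReal.coe_le_coe_iff.mpr (by have := one_div_le_one_div_of_le ha' hab; linarith)

lemma isEpsMin_mono {X Z : Type*} (Ψ : Set (Z → EReal)) (f : X → Set Z)
    {a b : ℝ} (ha : 0 ≤ a) (hab : a ≤ b) {x : X} :
    IsEpsMin Ψ f a x → IsEpsMin Ψ f b x := by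
  rintro ⟨ψ, hψ, h⟩
  refine ⟨ψ, hψ, ?_⟩
  by_cases hI : infVal f ψ = ⊥
  · rw [if_pos hI] at h ⊢
    exact h.trans (negInvBound_le ha hab)
  · rw [if_neg hI] at h ⊢
    exact h.trans (add_le_add_right (EReal.coe_le_coe_iff.mpr hab) _)

lemma minSet_nonempty {X Z : Type*} [Nonempty X] {Ψ : Set (Z → EReal)} (hΨ : Ψ.Nonempty)
    (f : X → Set Z) {ε : ℝ} (hε : 0 < ε) : ∃ x : X, IsEpsMin Ψ f ε x := by
  obtain ⟨ψ, hψ⟩ := hΨ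
  by_cases hI : infVal f ψ = ⊥
  · have hb : (⊥ : EReal) < negInvBound ε := by
      simp only [negInvBound, if_neg hε.ne']
      exact EReal.bot_lt_coe _
    have : (⨅ x : X, infExt ψ (f x)) < negInvBound ε := by
      rw [show (⨅ x : X, infExt ψ (f x)) = infVal f ψ from rfl, hI]; exact hb
    obtain ⟨x, hx⟩ := iInf_lt_iff.mp this
    exact ⟨x, ψ, hψ, by rw [if_pos hI]; exact hx.le⟩
  · by_cases hT : infVal f ψ + (ε : EReal) = ⊤
    · obtain x := Classical.arbitrary X
      exact ⟨x, ψ, hψ, by rw [if_neg hI, hT]; exact le_top⟩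
    · have hI' : infVal f ψ ≠ ⊤ := by
        intro h; exact hT (by rw [h]; exact EReal.top_add_of_ne_bot (by simp))
      lift infVal f ψ to ℝ using ⟨hI', hI⟩ with r hr
      have hlt : (r : EReal) < (r : EReal) + (ε : EReal) := by
        rw [← EReal.coe_add]
        exact EReal.coe_lt_coe_iff.mpr (by linarith)
      have : (⨅ x : X, infExt ψ (f x)) < (r : EReal) + (ε : EReal) := by
        rw [show (⨅ x : X, infExt ψ (f x)) = infVal f ψ from rfl, ← hr]; exact hlt
      obtain ⟨x, hx⟩ := iInf_lt_iff.mp this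
      refine ⟨x, ψ, hψ, ?_⟩
      rw [← hr, if_neg hI]
      exact hx.le


lemma minPlusSet_mono' {X Z : Type*} (Ψ : Set (Z → EReal)) (f : X → Set Z)
    {a b : ℝ} (hab : a ≤ b) : MinPlusSet Ψ f a ⊆ MinPlusSet Ψ f b := by
  intro x hx δ hδ
  have := hx (b - a + δ) (by linarith)
  rwa [show a + (b - a + δ) = b + δ by ring] at this

lemma minPlusSet_nonempty' {X Z : Type*} [Nonempty X] {Ψ : Set (Z → EReal)}
    (hΨ : Ψ.Nonempty) (f : X → Set Z) {ε : ℝ} (hε : 0 < ε) :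
    (MinPlusSet Ψ f ε).Nonempty := by
  obtain ⟨x, hx⟩ := minSet_nonempty hΨ f hε
  exact ⟨x, fun δ hδ => isEpsMin_mono Ψ f hε.le (by linarith) hx⟩


/-- if `Min(f,ε+,Ψ)` is compact for all `0 < ε ≤ ε₀`, then
`Min(f,0+,Ψ)` is nonempty and compact, and `Min(f,ε+,Ψ)` Hausdorff converges
to `Min(f,0+,Ψ)` as `ε → 0`. -/
theorem stmt16 {X Z : Type*} [Nonempty X] [AddCommGroup X] [Module ℝ X]
    [TopologicalSpace X] [IsTopologicalAddGroup X] [ContinuousSMul ℝ X] [T2Space X]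
    [Preorder Z] (Ψ : Set (Z → EReal)) (hΨ : Ψ.Nonempty)
    (hmono : ∀ ψ ∈ Ψ, Monotone ψ) (f : X → Set Z)
    (hf : ∀ x, f x = clPsi Ψ (f x)) (ε₀ : ℝ) (hε₀ : 0 < ε₀)
    (hcpt : ∀ ε : ℝ, 0 < ε → ε ≤ ε₀ → IsCompact (MinPlusSet Ψ f ε)) :
    (MinPlusSet Ψ f 0).Nonempty ∧ IsCompact (MinPlusSet Ψ f 0) ∧
    ∀ U ∈ nhds (0 : X), ∃ ε₁ : ℝ, 0 < ε₁ ∧ ε₁ ≤ ε₀ ∧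
      ∀ ε : ℝ, 0 < ε → ε ≤ ε₁ →
        MinPlusSet Ψ f ε ⊆ MinPlusSet Ψ f 0 + U ∧
        MinPlusSet Ψ f 0 ⊆ MinPlusSet Ψ f ε + U := by
  set t : ℕ → Set X := fun n => MinPlusSet Ψ f (ε₀ / (n + 1)) with ht
  have htpos : ∀ n : ℕ, 0 < ε₀ / (n + 1) := fun n => div_pos hε₀ (by positivity)
  have htle : ∀ n : ℕ, ε₀ / (n + 1) ≤ ε₀ := fun n =>
    div_le_self hε₀.le (by exact_mod_cast Nat.one_le_iff_ne_zero.mpr (Nat.succ_ne_zero n))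
  have htcpt : ∀ n, IsCompact (t n) := fun n => hcpt _ (htpos n) (htle n)
  have htclosed : ∀ n, IsClosed (t n) := fun n => (htcpt n).isClosed
  have htmono : ∀ n, t (n + 1) ⊆ t n := fun n => by
    apply minPlusSet_mono' Ψ f
    apply div_le_div_of_nonneg_left hε₀.le (by positivity)
    push_cast; linarith
  have htne : ∀ n, (t n).Nonempty := fun n => minPlusSet_nonempty' hΨ f (htpos n)
  have hKeq : MinPlusSet Ψ f 0 = ⋂ n, t n := by
    apply Set.eq_of_subset_of_subset
    · exact Set.subset_iInter fun n => minPlusSet_mono' Ψ f (htpos n).le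
    · intro x hx δ hδ
      obtain ⟨n, hn⟩ := exists_nat_gt (ε₀ / δ)
      have he : ε₀ / (n + 1) < δ := by
        rw [div_lt_iff₀ (by positivity)]
        have h1 : ε₀ / δ < (n : ℝ) + 1 := hn.trans_le (by linarith)
        calc ε₀ = (ε₀ / δ) * δ := by field_simp
          _ < ((n : ℝ) + 1) * δ := by exact mul_lt_mul_of_pos_right h1 hδ
          _ = δ * ((n : ℝ) + 1) := by ring
      have hx' := Set.mem_iInter.mp hx n
      have := hx' (δ - ε₀ / (n + 1)) (by linarith)
      rwa [show ε₀ / (n + 1) + (δ - ε₀ / (n + 1)) = 0 + δ by ring] at this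
  have hKsub : MinPlusSet Ψ f 0 ⊆ t 0 := hKeq ▸ Set.iInter_subset t 0
  have hKne : (MinPlusSet Ψ f 0).Nonempty := by
    rw [hKeq]
    exact IsCompact.nonempty_iInter_of_sequence_nonempty_isCompact_isClosed t htmono htne
      (htcpt 0) htclosed
  have hKcl : IsClosed (MinPlusSet Ψ f 0) := hKeq ▸ isClosed_iInter htclosed
  have hKcpt : IsCompact (MinPlusSet Ψ f 0) := (htcpt 0).of_isClosed_subset hKcl hKsub
  refine ⟨hKne, hKcpt, fun U hU => ?_⟩
  obtain ⟨V, hVU, hVopen, hV0⟩ := mem_nhds_iff.mp hU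
  have hopen : IsOpen (MinPlusSet Ψ f 0 + V) := hVopen.add_left
  have hex : ∃ n, t n ⊆ MinPlusSet Ψ f 0 + V := by
    by_contra h
    push_neg at h
    have hsne : ∀ n, (t n \ (MinPlusSet Ψ f 0 + V)).Nonempty := fun n => by
      obtain ⟨x, hx1, hx2⟩ := Set.not_subset.mp (h n)
      exact ⟨x, hx1, hx2⟩
    have hscl : ∀ n, IsClosed (t n \ (MinPlusSet Ψ f 0 + V)) := fun n =>
      (htclosed n).sdiff hopen
    have hscpt : IsCompact (t 0 \ (MinPlusSet Ψ f 0 + V)) :=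
      (htcpt 0).of_isClosed_subset (hscl 0) diff_subset
    have hsmono : ∀ n, (t (n + 1) \ (MinPlusSet Ψ f 0 + V)) ⊆
        (t n \ (MinPlusSet Ψ f 0 + V)) := fun n => diff_subset_diff_left (htmono n)
    obtain ⟨x, hx⟩ := IsCompact.nonempty_iInter_of_sequence_nonempty_isCompact_isClosed _
      hsmono hsne hscpt hscl
    have hxK : x ∈ MinPlusSet Ψ f 0 := by
      rw [hKeq]
      exact Set.mem_iInter.mpr fun n => (Set.mem_iInter.mp hx n).1
    exact (Set.mem_iInter.mp hx 0).2 (by simpa using Set.add_mem_add hxK hV0)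
  obtain ⟨n, hn⟩ := hex
  refine ⟨ε₀ / (n + 1), htpos n, htle n, fun ε hε hεle => ⟨?_, ?_⟩⟩
  · exact (minPlusSet_mono' Ψ f hεle).trans
      (hn.trans (Set.add_subset_add_left hVU))
  · intro x hx
    have hx' : x ∈ MinPlusSet Ψ f ε := minPlusSet_mono' Ψ f hε.le hx
    simpa using Set.add_mem_add hx' (mem_of_mem_nhds hU)
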